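/- Let H be a complex Hilbert space and I ⊆ L(H) a distributive ideal. Then f(g(I)) = I, where g(I) is the set of rays contained in some member of I and f(S) = {K : every ray in K lies in S}. In particular every distributive ideal of L(H) is determined by its rays. -/

import Mathlib

variable {H : Type*} [NormedAddCommGroup H] [InnerProductSpace ℂ H]

/-- The ray space: the set of one-dimensional subspaces (rays) of `H`. -/
def RaySp (H : Type*) [NormedAddCommGroup H] [InnerProductSpace ℂ H] :
    Set (Submodule ℂ H) :=
  {r | ∃ ψ : H, ψ ≠ 0 ∧ r = (ℂ ∙ ψ)}

/-- The set of rays contained in a subspace `K`. -/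
def rset (K : Submodule ℂ H) : Set (Submodule ℂ H) :=
  {r | ∃ ψ : H, ψ ≠ 0 ∧ ψ ∈ K ∧ r = (ℂ ∙ ψ)}

/-- The orthogonal pseudo-negation on sets of rays. -/
def pneg (S : Set (Submodule ℂ H)) : Set (Submodule ℂ H) :=
  {r | ∃ ψ : H, ψ ≠ 0 ∧ r = (ℂ ∙ ψ) ∧
    ∀ φ : H, φ ≠ 0 → (ℂ ∙ φ) ∈ S → (inner ℂ ψ φ : ℂ) = 0}

/-- `fset S` = the set of closed subspaces all of whose rays lie in `S`. -/
def fset (S : Set (Submodule ℂ H)) : Set (Submodule ℂ H) :=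
  {K | IsClosed (K : Set H) ∧ ∀ ψ : H, ψ ∈ K → ψ ≠ 0 → (ℂ ∙ ψ) ∈ S}

/-- `gset I` = the set of rays contained in some member of `I`. -/
def gset (I : Set (Submodule ℂ H)) : Set (Submodule ℂ H) :=
  {r | ∃ K ∈ I, ∃ ψ : H, ψ ≠ 0 ∧ ψ ∈ K ∧ r = (ℂ ∙ ψ)}

/-- A distributive ideal of the lattice of closed subspaces of `H`: a nonempty,
downward-closed set of closed subspaces, closed under joins that distribute over
all meets (joins of closed subspaces being closures of algebraic suprema). -/
def IsDistIdeal (I : Set (Submodule ℂ H)) : Prop :=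
  (∀ K ∈ I, IsClosed (K : Set H)) ∧ I.Nonempty ∧
  (∀ K ∈ I, ∀ K' : Submodule ℂ H, IsClosed (K' : Set H) → K' ≤ K → K' ∈ I) ∧
  (∀ 𝒦 ⊆ I, (∀ K' : Submodule ℂ H, IsClosed (K' : Set H) →
      (sSup 𝒦).topologicalClosure ⊓ K' = (⨆ K ∈ 𝒦, K ⊓ K').topologicalClosure) →
    (sSup 𝒦).topologicalClosure ∈ I)

open Classical in
/-- The weakly-Heyting implication on sets of rays, defined via atoms (singleton
ray sets) and double pseudo-negation. -/
noncomputable def himp' (S₁ S₂ : Set (Submodule ℂ H)) : Set (Submodule ℂ H) :=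
  if S₁ = ∅ then RaySp H
  else ⋂ r ∈ S₁, pneg (pneg (pneg {r} ∪ ({r} ∩ S₂)))

/-- Every distributive ideal of the lattice of closed subspaces is determined by
its rays: `fset (gset I) = I`. -/
theorem fset_gset [CompleteSpace H]
    (I : Set (Submodule ℂ H)) (hI : IsDistIdeal I) :
    fset (gset I) = I := by
  obtain ⟨hcl, -, hdown, hjoin⟩ := hI
  ext K
  constructor
  · rintro ⟨hKcl, hrays⟩
    set 𝒦 : Set (Submodule ℂ H) := {r | ∃ ψ : H, ψ ≠ 0 ∧ ψ ∈ K ∧ r = (ℂ ∙ ψ)} with h𝒦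
    have hsub : 𝒦 ⊆ I := by
      rintro r ⟨ψ, hψ0, hψK, rfl⟩
      obtain ⟨K', hK'I, φ, hφ0, hφK', hr⟩ := hrays ψ hψK hψ0
      refine hdown K' hK'I _ (Submodule.closed_of_finiteDimensional _) ?_
      rw [hr]
      exact (Submodule.span_singleton_le_iff_mem φ K').mpr hφK'
    have hsup : sSup 𝒦 = K := by
      apply le_antisymm
      · apply sSup_le
        rintro r ⟨ψ, h0, hK, rfl⟩
        exact (Submodule.span_singleton_le_iff_mem ψ K).mpr hK
      · intro x hx
        by_cases hx0 : x = 0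
        · simp [hx0]
        · exact le_sSup (show (ℂ ∙ x) ∈ 𝒦 from ⟨x, hx0, hx, rfl⟩)
            (Submodule.mem_span_singleton_self x)
    have hclosK : (sSup 𝒦).topologicalClosure = K := by
      rw [hsup]; exact hKcl.submodule_topologicalClosure_eq
    rw [← hclosK]
    apply hjoin 𝒦 hsub
    intro K' hK'cl
    rw [hclosK]
    have h1 : (⨆ r ∈ 𝒦, r ⊓ K') = K ⊓ K' := by
      apply le_antisymm
      · apply iSup_le; intro r; apply iSup_le
        rintro ⟨ψ, h0, hK, rfl⟩
        exact inf_le_inf_right _ ((Submodule.span_singleton_le_iff_mem ψ K).mpr hK)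
      · intro x hx
        rw [Submodule.mem_inf] at hx
        by_cases hx0 : x = 0
        · simp [hx0]
        · have hle : (ℂ ∙ x) ⊓ K' ≤ ⨆ r ∈ 𝒦, r ⊓ K' :=
            le_iSup₂_of_le (ℂ ∙ x) ⟨x, hx0, hx.1, rfl⟩ le_rfl
          exact hle ⟨Submodule.mem_span_singleton_self x, hx.2⟩
    rw [h1, (hKcl.inter hK'cl).submodule_topologicalClosure_eq]
  · intro hK
    exact ⟨hcl K hK, fun ψ hψ h0 => ⟨K, hK, ψ, h0, hψ, rfl⟩⟩
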